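/- arXiv:1006.1153 — 5 statements merged into one kernel-verified Lean document; each statement's English description precedes it below -/
import Mathlib

section
/- For the matrix A with rows (1,1,2,0) and (1,1,0,2), and for b₁, b₂ both odd, the number of positive integer solutions to Ax = (b₁,b₂) equals (1/4)b₁² - b₁ + 3/4 if b₁ ≤ b₂ and (1/4)b₂² - b₂ + 3/4 if b₁ ≥ b₂. -/
lemma gaussQ (N : ℕ) : ∑ k ∈ Finset.Icc (1:ℤ) (N:ℤ), (k:ℚ) = N*(N+1)/2 := by
  induction N with
  | zero => simp
  | succ n ih =>
    have h : Finset.Icc (1:ℤ) ((n:ℤ)+1) = insert ((n:ℤ)+1) (Finset.Icc 1 (n:ℤ)) := by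
      ext x; simp only [Finset.mem_Icc, Finset.mem_insert]; omega
    push_cast
    rw [h, Finset.sum_insert (by simp), ih]
    push_cast
    ring

/-- For the matrix with rows `(1,1,2,0)` and `(1,1,0,2)` and `b₁, b₂` both odd (and positive),
the number of positive integer solutions to `Ax = (b₁,b₂)` equals `b₁²/4 - b₁ + 3/4` if
`b₁ ≤ b₂` and `b₂²/4 - b₂ + 3/4` if `b₁ ≥ b₂`. -/
theorem stmt3 (b₁ b₂ : ℤ) (h₁ : Odd b₁) (h₂ : Odd b₂) (hp₁ : 0 < b₁) (hp₂ : 0 < b₂) :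
    (Nat.card {x : Fin 4 → ℤ // (∀ i, 0 < x i) ∧
        x 0 + x 1 + 2 * x 2 = b₁ ∧ x 0 + x 1 + 2 * x 3 = b₂} : ℚ)
    = if b₁ ≤ b₂ then (1 / 4 : ℚ) * (b₁ : ℚ) ^ 2 - (b₁ : ℚ) + 3 / 4
      else (1 / 4 : ℚ) * (b₂ : ℚ) ^ 2 - (b₂ : ℚ) + 3 / 4 := by
  obtain ⟨c₁, hc₁⟩ := h₁
  obtain ⟨c₂, hc₂⟩ := h₂
  obtain ⟨m, hm⟩ : ∃ m : ℤ, m = min c₁ c₂ := ⟨_, rfl⟩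
  have hc₁0 : 0 ≤ c₁ := by omega
  have hc₂0 : 0 ≤ c₂ := by omega
  have hm₁ : m ≤ c₁ := by omega
  have hm₂ : m ≤ c₂ := by omega
  have hm0 : 0 ≤ m := by omega
  obtain ⟨F, hF⟩ : ∃ F : Finset ((_ : ℤ) × ℤ),
      F = (Finset.Icc (1:ℤ) (m-1)).sigma (fun k => Finset.Icc (1:ℤ) (2*k)) := ⟨_, rfl⟩
  have hmemF : ∀ p : (_ : ℤ) × ℤ, p ∈ F ↔ (1 ≤ p.1 ∧ p.1 ≤ m - 1) ∧ 1 ≤ p.2 ∧ p.2 ≤ 2 * p.1 := by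
    intro p; rw [hF]; simp [Finset.mem_sigma, Finset.mem_Icc]
  have e : {x : Fin 4 → ℤ // (∀ i, 0 < x i) ∧
      x 0 + x 1 + 2 * x 2 = b₁ ∧ x 0 + x 1 + 2 * x 3 = b₂} ≃ {p // p ∈ F} :=
    { toFun := fun x => ⟨⟨c₁ - x.1 2, x.1 0⟩, by
        obtain ⟨hpos, e1, e2⟩ := x.2
        have h0 := hpos 0; have h1 := hpos 1; have h2 := hpos 2; have h3 := hpos 3
        rw [hmemF]
        dsimp only
        omega⟩
      invFun := fun p => ⟨![p.1.2, 2*p.1.1+1-p.1.2, c₁-p.1.1, c₂-p.1.1], by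
        have hp := p.2
        rw [hmemF] at hp
        refine ⟨fun i => ?_, ?_, ?_⟩
        · fin_cases i <;> simp <;> omega
        · simp; omega
        · simp; omega⟩
      left_inv := fun x => by
        obtain ⟨hpos, e1, e2⟩ := x.2
        apply Subtype.ext
        funext i
        fin_cases i <;> simp <;> omega
      right_inv := fun p => by
        apply Subtype.ext
        apply Sigma.ext <;> simp }
  have hcard : Nat.card {x : Fin 4 → ℤ // (∀ i, 0 < x i) ∧
      x 0 + x 1 + 2 * x 2 = b₁ ∧ x 0 + x 1 + 2 * x 3 = b₂} = F.card := by
    rw [Nat.card_congr e, Nat.card_eq_finsetCard]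
  rw [hcard]
  clear e hmemF hcard
  have hFcard : (F.card : ℚ) = (m:ℚ)^2 - m := by
    rw [hF, Finset.card_sigma]
    push_cast
    have step : ∀ k ∈ Finset.Icc (1:ℤ) (m-1),
        ((Finset.Icc (1:ℤ) (2*k)).card : ℚ) = 2 * (k:ℚ) := by
      intro k hk
      simp only [Finset.mem_Icc] at hk
      rw [Int.card_Icc]
      have h2k : (0:ℤ) ≤ 2*k + 1 - 1 := by omega
      have : (((2*k + 1 - 1).toNat : ℤ) : ℚ) = ((2*k + 1 - 1 : ℤ) : ℚ) := by
        rw [Int.toNat_of_nonneg h2k]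
      push_cast at this ⊢
      linarith
    rw [Finset.sum_congr rfl step, ← Finset.mul_sum]
    rcases le_or_gt m 1 with hm1 | hm1
    · rw [Finset.Icc_eq_empty (by omega)]
      have hm01 : m = 0 ∨ m = 1 := by omega
      rcases hm01 with h | h <;> rw [h] <;> norm_num
    · obtain ⟨N, hN⟩ : ∃ N : ℕ, (N:ℤ) = m - 1 :=
        ⟨(m-1).toNat, Int.toNat_of_nonneg (by omega)⟩
      rw [← hN, gaussQ]
      have hmN : (m:ℚ) = (N:ℚ) + 1 := by
        have : ((N:ℤ):ℚ) = ((m - 1 : ℤ) : ℚ) := by rw [hN]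
        push_cast at this
        linarith
      rw [hmN]; ring
  rw [hFcard]
  have hb₁ : (b₁:ℚ) = 2*(c₁:ℚ)+1 := by exact_mod_cast hc₁
  have hb₂ : (b₂:ℚ) = 2*(c₂:ℚ)+1 := by exact_mod_cast hc₂
  split
  · next h =>
    have hmc : m = c₁ := by omega
    have : (m:ℚ) = (c₁:ℚ) := by exact_mod_cast hmc
    rw [this, hb₁]; ring
  · next h =>
    have hmc : m = c₂ := by omega
    have : (m:ℚ) = (c₂:ℚ) := by exact_mod_cast hmc
    rw [this, hb₂]; ring
end

section
/- Define N_{0,4}(b₁,b₂,b₃,b₄) for positive even integers bᵢ by the recursion (∑bᵢ)·N_{0,4}(b) = ∑_{i≠j} 4·C((bᵢ+bⱼ)/2 + 1, 3). Then N_{0,4}(b₁,b₂,b₃,b₄) = (b₁² + b₂² + b₃² + b₄² − 4)/4. Equivalently, the identity ∑_{i≠j} 4·C((bᵢ+bⱼ)/2 + 1, 3) = (∑ᵢ bᵢ)·(∑ᵢ bᵢ² − 4)/4 holds for all even positive integers b₁,...,b₄. -/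
lemma choose3_cast (k : ℕ) : (Nat.choose (k + 1) 3 : ℚ) = (k + 1) * k * (k - 1) / 6 := by
  induction k with
  | zero => norm_num [Nat.choose]
  | succ n ih =>
    have h : (n + 2).choose 3 = (n + 1).choose 2 + (n + 1).choose 3 :=
      Nat.choose_succ_succ (n + 1) 2
    have h2 : ((n + 1).choose 2 : ℚ) = (n + 1) * n / 2 := by
      rw [Nat.cast_choose_two]; push_cast; ring
    rw [show n + 1 + 1 = n + 2 from rfl, h]
    push_cast [ih, h2]
    ring

/-- For positive even integers `b₁,...,b₄`, summing `4·C((bᵢ+bⱼ)/2 + 1, 3)` over the six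
unordered pairs `{i,j}` gives `(∑ bᵢ)·(∑ bᵢ² - 4)/4`, i.e. the recursion determines
`N_{0,4}(b) = (b₁² + b₂² + b₃² + b₄² - 4)/4`. -/
theorem stmt11 (b : Fin 4 → ℕ) (hp : ∀ i, 0 < b i) (he : ∀ i, Even (b i)) :
    (∑ p ∈ Finset.univ.filter (fun p : Fin 4 × Fin 4 => p.1 < p.2),
        (4 * Nat.choose ((b p.1 + b p.2) / 2 + 1) 3 : ℚ))
      = (∑ i, (b i : ℚ)) * ((∑ i, (b i : ℚ) ^ 2) - 4) / 4 := by
  have hmod : ∀ i, b i % 2 = 0 := fun i => Nat.even_iff.mp (he i)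
  have hdiv : ∀ i j, (b i + b j) / 2 = b i / 2 + b j / 2 := fun i j => by
    have := hmod i; have := hmod j; omega
  have hb : ∀ i, (b i : ℚ) = 2 * (b i / 2 : ℕ) := fun i => by
    have := hmod i
    have : 2 * (b i / 2) = b i := by omega
    exact_mod_cast (congrArg (Nat.cast (R := ℚ)) this).symm
  have hge : ∀ i, 1 ≤ b i / 2 := fun i => by
    have := hp i; have := hmod i; omega
  rw [show (Finset.univ.filter (fun p : Fin 4 × Fin 4 => p.1 < p.2)) =
      {((0:Fin 4),(1:Fin 4)), (0,2), (0,3), (1,2), (1,3), (2,3)} from by decide]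
  rw [Finset.sum_insert (by decide), Finset.sum_insert (by decide),
    Finset.sum_insert (by decide), Finset.sum_insert (by decide),
    Finset.sum_insert (by decide), Finset.sum_singleton]
  norm_num [hdiv, choose3_cast, Fin.sum_univ_four, hb]
  have h0 := hge 0; have h1 := hge 1; have h2 := hge 2; have h3 := hge 3
  set c0 := (b 0 / 2 : ℕ); set c1 := (b 1 / 2 : ℕ)
  set c2 := (b 2 / 2 : ℕ); set c3 := (b 3 / 2 : ℕ)
  have g0 : (1:ℚ) ≤ c0 := by exact_mod_cast h0
  have g1 : (1:ℚ) ≤ c1 := by exact_mod_cast h1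
  have g2 : (1:ℚ) ≤ c2 := by exact_mod_cast h2
  have g3 : (1:ℚ) ≤ c3 := by exact_mod_cast h3
  push_cast
  ring
end

section
/- For b₁, b₂ odd positive integers and b₃, b₄ even positive integers, the identity 4·C((b₁+b₂)/2 + 1, 3) + 4·C((b₃+b₄)/2 + 1, 3) + ∑_{(i,j) mixed parity pairs} (1/2)·C(bᵢ+bⱼ+1, 3) = (∑ᵢ bᵢ)·(b₁² + b₂² + b₃² + b₄² − 2)/4 holds, where the mixed-parity sum runs over the ordered pairs (i,j) with {i,j} ∈ {{1,3},{1,4},{2,3},{2,4}}, each counted twice (i.e. 8 terms total, or 4 unordered pairs each with weight 1). -/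
lemma ch2q (n : ℕ) : (((n+2).choose 2 : ℕ) : ℚ) = (n+1)*(n+2)/2 := by
  induction n with
  | zero => norm_num
  | succ k ih =>
    have : (k+3).choose 2 = (k+2).choose 1 + (k+2).choose 2 := Nat.choose_succ_succ _ _
    rw [this]
    push_cast [ih, Nat.choose_one_right]
    ring

lemma ch3q (n : ℕ) : (((n+2).choose 3 : ℕ) : ℚ) = n*(n+1)*(n+2)/6 := by
  induction n with
  | zero => norm_num
  | succ k ih =>
    have : (k+3).choose 3 = (k+2).choose 2 + (k+2).choose 3 := Nat.choose_succ_succ _ _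
    rw [this]
    push_cast [ih, ch2q]
    ring

/-- For `b₁, b₂` odd positive and `b₃, b₄` even positive, the mixed-parity recursion identity
`4·C((b₁+b₂)/2+1,3) + 4·C((b₃+b₄)/2+1,3) + ∑_{mixed pairs} (1/2)·C(bᵢ+bⱼ+1,3)
 = (∑ bᵢ)·(∑ bᵢ² - 2)/4` holds. -/
theorem stmt12 (b₁ b₂ b₃ b₄ : ℕ) (h₁ : Odd b₁) (h₂ : Odd b₂) (h₃ : Even b₃) (h₄ : Even b₄)
    (hp₁ : 0 < b₁) (hp₂ : 0 < b₂) (hp₃ : 0 < b₃) (hp₄ : 0 < b₄) :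
    4 * (Nat.choose ((b₁ + b₂) / 2 + 1) 3 : ℚ)
      + 4 * (Nat.choose ((b₃ + b₄) / 2 + 1) 3 : ℚ)
      + (1 / 2 : ℚ) * ((Nat.choose (b₁ + b₃ + 1) 3 : ℚ) + (Nat.choose (b₁ + b₄ + 1) 3 : ℚ)
          + (Nat.choose (b₂ + b₃ + 1) 3 : ℚ) + (Nat.choose (b₂ + b₄ + 1) 3 : ℚ))
      = ((b₁ : ℚ) + b₂ + b₃ + b₄) *
          ((b₁ : ℚ) ^ 2 + (b₂ : ℚ) ^ 2 + (b₃ : ℚ) ^ 2 + (b₄ : ℚ) ^ 2 - 2) / 4 := by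
  obtain ⟨x, rfl⟩ := h₁
  obtain ⟨y, rfl⟩ := h₂
  obtain ⟨z, hz⟩ := h₃
  obtain ⟨w, hw⟩ := h₄
  obtain ⟨z, rfl⟩ : ∃ z', b₃ = 2 * z' + 2 := by
    refine ⟨z - 1, ?_⟩; omega
  obtain ⟨w, rfl⟩ : ∃ w', b₄ = 2 * w' + 2 := by
    refine ⟨w - 1, ?_⟩; omega
  have e1 : (2*x+1 + (2*y+1)) / 2 + 1 = (x+y) + 2 := by omega
  have e2 : (2*z+2 + (2*w+2)) / 2 + 1 = (z+w+1) + 2 := by omega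
  have e3 : 2*x+1 + (2*z+2) + 1 = (2*x+2*z+2) + 2 := by omega
  have e4 : 2*x+1 + (2*w+2) + 1 = (2*x+2*w+2) + 2 := by omega
  have e5 : 2*y+1 + (2*z+2) + 1 = (2*y+2*z+2) + 2 := by omega
  have e6 : 2*y+1 + (2*w+2) + 1 = (2*y+2*w+2) + 2 := by omega
  rw [e1, e2, e3, e4, e5, e6, ch3q, ch3q, ch3q, ch3q, ch3q, ch3q]
  push_cast
  ring
end

section
/- Let c(n,k) be defined by c(0,k) = k, c(n,0) = 0 for n,k ≥ 0, and c(n,k) = c(n,k−1) + c(n−1,k) + c(n−1,k−1) for n,k > 0. Then as formal power series in x, 1 + 2·∑_{n≥0} c(n,k)·x^{n+1} = ((1+x)/(1−x))^k for every nonnegative integer k. -/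
open PowerSeries

/-- If `c(0,k) = k`, `c(n,0) = 0` and `c(n,k) = c(n,k-1) + c(n-1,k) + c(n-1,k-1)` for
`n,k > 0`, then `1 + 2·∑_{n≥0} c(n,k)·x^{n+1} = ((1+x)/(1-x))^k` as formal power series,
i.e. `(1 - x)^k · (1 + 2·∑_{n≥0} c(n,k)·x^{n+1}) = (1 + x)^k`. -/
theorem stmt14 (c : ℕ → ℕ → ℤ)
    (h0 : ∀ k, c 0 k = k) (h0' : ∀ n, c n 0 = 0)
    (hrec : ∀ n k, c (n + 1) (k + 1) = c (n + 1) k + c n (k + 1) + c n k)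
    (k : ℕ) :
    (1 - X : ℤ⟦X⟧) ^ k *
        PowerSeries.mk (fun m => if m = 0 then 1 else 2 * c (m - 1) k)
      = (1 + X : ℤ⟦X⟧) ^ k := by
  set F : ℕ → ℤ⟦X⟧ :=
    fun k => PowerSeries.mk (fun m => if m = 0 then 1 else 2 * c (m - 1) k) with hF
  have key : ∀ k, (1 - X : ℤ⟦X⟧) * F (k + 1) = (1 + X) * F k := by
    intro k
    ext n
    simp only [sub_mul, add_mul, one_mul, map_sub, map_add, hF]
    cases n with
    | zero => simp
    | succ n =>
      rw [PowerSeries.coeff_succ_X_mul, PowerSeries.coeff_succ_X_mul]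
      cases n with
      | zero =>
        simp [h0]
        ring
      | succ n =>
        simp only [PowerSeries.coeff_mk, Nat.succ_ne_zero, if_false,
          Nat.add_sub_cancel]
        cases n with
        | zero => simp [hrec 0 k]; ring
        | succ n => simp [hrec (n+1) k]; ring
  induction k with
  | zero =>
    simp only [pow_zero, one_mul, hF]
    ext n
    cases n with
    | zero => simp
    | succ n => simp [h0']
  | succ k ih =>
    have : (1 - X : ℤ⟦X⟧) ^ (k + 1) * F (k + 1)
        = (1 + X) * ((1 - X) ^ k * F k) := by
      rw [pow_succ]
      rw [mul_assoc, key k]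
      ring
    rw [this, ih, ← pow_succ']
end

section
/- For a linear map A : ℝᴺ → ℝⁿ with strictly positive... (nonnegative entries and nonzero columns α₁,...,α_N ∈ ℝⁿ), the Laplace transform of the polytope volume satisfies ∫_{ℝ₊ⁿ} e^{−b·s} V_{P_A}(b) db = ∏_{i=1}^N 1/(αᵢ·s) for all s ∈ ℝⁿ with all coordinates strictly positive, where V_{P_A}(b) is the quotient volume of P_A(b) = {x ∈ ℝ₊ᴺ : Ax = b}. Equivalently (Fubini/pushforward form): ∫_{ℝ₊ᴺ} e^{−(Ax)·s} dx = ∏_{i=1}^N 1/(αᵢ·s). -/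
open MeasureTheory

lemma aux_exp_int (c : ℝ) (hc : 0 < c) :
    (∫ t in Set.Ioi (0:ℝ), Real.exp (-(c * t))) = 1 / c := by
  have h := Real.integral_rpow_mul_exp_neg_mul_Ioi (a := 1) (r := c) one_pos hc
  simp only [sub_self, Real.rpow_zero, one_mul, Real.Gamma_one, mul_one,
    Real.rpow_one] at h
  rw [← h]

/-- Laplace transform of the polytope volume, in pushforward form: for a matrix `A` with
nonnegative entries and nonzero columns `α₁,...,α_N` and `s` with strictly positive
coordinates, `∫_{ℝ₊ᴺ} e^{-(Ax)·s} dx = ∏ᵢ 1/(αᵢ·s)`. -/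
theorem stmt19 (N n : ℕ) (α : Fin N → Fin n → ℝ) (s : Fin n → ℝ)
    (hα : ∀ i j, 0 ≤ α i j) (hcol : ∀ i, α i ≠ 0) (hs : ∀ j, 0 < s j) :
    (∫ x in Set.univ.pi (fun _ : Fin N => Set.Ioi (0 : ℝ)),
        Real.exp (-(∑ j, (∑ i, α i j * x i) * s j)))
      = ∏ i, 1 / (∑ j, α i j * s j) := by
  set c : Fin N → ℝ := fun i => ∑ j, α i j * s j with hc
  have hcpos : ∀ i, 0 < c i := by
    intro i
    have hne : ∃ j, α i j ≠ 0 := by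
      by_contra h
      push_neg at h
      exact hcol i (funext h)
    obtain ⟨j0, hj0⟩ := hne
    have : 0 < α i j0 := lt_of_le_of_ne (hα i j0) (Ne.symm hj0)
    exact Finset.sum_pos' (fun j _ => mul_nonneg (hα i j) (hs j).le)
      ⟨j0, Finset.mem_univ _, mul_pos this (hs j0)⟩
  have hrw : ∀ x : Fin N → ℝ,
      Real.exp (-(∑ j, (∑ i, α i j * x i) * s j)) = ∏ i, Real.exp (-(c i * x i)) := by
    intro x
    have hsum : ∑ j, (∑ i, α i j * x i) * s j = ∑ i, c i * x i := calc
      ∑ j, (∑ i, α i j * x i) * s j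
        = ∑ j, ∑ i, α i j * s j * x i := by
          refine Finset.sum_congr rfl fun j _ => ?_
          rw [Finset.sum_mul]
          exact Finset.sum_congr rfl fun i _ => by ring
      _ = ∑ i, c i * x i := by
          rw [Finset.sum_comm]
          simp_rw [hc, Finset.sum_mul]
    rw [hsum, ← Finset.sum_neg_distrib, Real.exp_sum]
  calc
    (∫ x in Set.univ.pi (fun _ : Fin N => Set.Ioi (0 : ℝ)),
        Real.exp (-(∑ j, (∑ i, α i j * x i) * s j)))
      = ∫ x : Fin N → ℝ, ∏ i, Set.indicator (Set.Ioi (0:ℝ))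
          (fun t => Real.exp (-(c i * t))) (x i) := by
        rw [← integral_indicator (MeasurableSet.univ_pi fun _ => measurableSet_Ioi)]
        congr 1
        ext x
        by_cases hx : x ∈ Set.univ.pi (fun _ : Fin N => Set.Ioi (0 : ℝ))
        · rw [Set.indicator_of_mem hx, hrw]
          refine Finset.prod_congr rfl fun i _ => ?_
          exact (Set.indicator_of_mem (hx i (Set.mem_univ i)) (fun t => Real.exp (-(c i * t)))).symm
        · rw [Set.indicator_of_notMem hx]
          simp only [Set.mem_pi, Set.mem_univ, forall_true_left] at hx
          push_neg at hx
          obtain ⟨i, hi⟩ := hx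
          exact (Finset.prod_eq_zero (Finset.mem_univ i)
            (Set.indicator_of_notMem hi _)).symm
    _ = ∏ i, ∫ t : ℝ, Set.indicator (Set.Ioi (0:ℝ))
          (fun t => Real.exp (-(c i * t))) t :=
        integral_fintype_prod_eq_prod _
    _ = ∏ i, 1 / c i := by
        refine Finset.prod_congr rfl fun i _ => ?_
        rw [integral_indicator measurableSet_Ioi]
        exact aux_exp_int _ (hcpos i)
end
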